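/- Let R be a commutative coherent ring such that every exact complex of FP-injective R-modules has all of its cycles Ding injective. Then R is noetherian (equivalently, every direct sum of injective R-modules is injective). -/

import Mathlib

/-!
Definitions for formalizing "Acyclic complexes and Gorenstein rings"
(Estrada, Iacob, Zolt).
-/

open CategoryTheory Opposite

universe u
noncomputable section
namespace AcyclicGorenstein

/-! ### Complexes of modules -/

section Complexes
variable (T : Type u) [Ring T]

/-- Unbounded chain complexes of left `T`-modules. -/
abbrev Cx := ChainComplex (ModuleCat.{u} T) ℤ

/-- A complex is exact (acyclic) if it has zero homology in every degree. -/
def IsExactCx (C : Cx T) : Prop := ∀ n : ℤ, Function.Exact (C.d (n+1) n) (C.d n (n-1))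

/-- The `n`-th cycle module `Z_n C = ker (d : C_n → C_{n-1})` of a complex. -/
def cycleMod (C : Cx T) (n : ℤ) : ModuleCat.{u} T :=
  ModuleCat.of T (LinearMap.ker (C.d n (n-1)).hom)

/-- `M` is (isomorphic to) a cycle of the complex `C`. -/
def IsCycleOf (C : Cx T) (M : ModuleCat.{u} T) : Prop :=
  ∃ n : ℤ, Nonempty (M ≃ₗ[T] LinearMap.ker (C.d n (n-1)).hom)

/-- All cycles of `C` belong to the class `P`. -/
def cyclesIn (P : ModuleCat.{u} T → Prop) (C : Cx T) : Prop := ∀ n : ℤ, P (cycleMod T C n)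

/-- All components of `C` belong to the class `P`, i.e. `C ∈ dw(P)`. -/
def dwIn (P : ModuleCat.{u} T → Prop) (C : Cx T) : Prop := ∀ n : ℤ, P (C.X n)

/-- A chain map is null-homotopic. -/
def NullHomotopic {V W : Cx T} (f : V ⟶ W) : Prop := Nonempty (Homotopy f 0)

/-- Exactness of the complex `Hom(E, C)`: every map `E → Z_n C` lifts along `d`. -/
def homIntoExact (E : ModuleCat.{u} T) (C : Cx T) : Prop :=
  ∀ (n : ℤ) (f : E →ₗ[T] C.X n), (C.d n (n-1)).hom ∘ₗ f = 0 →
    ∃ g : E →ₗ[T] C.X (n+1), (C.d (n+1) n).hom ∘ₗ g = f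

/-- Exactness of the complex `Hom(C, Q)`. -/
def homOutExact (C : Cx T) (Q : ModuleCat.{u} T) : Prop :=
  ∀ (n : ℤ) (f : C.X n →ₗ[T] Q), f ∘ₗ (C.d (n+1) n).hom = 0 →
    ∃ g : C.X (n-1) →ₗ[T] Q, g ∘ₗ (C.d n (n-1)).hom = f

end Complexes

/-! ### Ext, orthogonal classes, cotorsion pairs -/

section Ext
variable (T : Type u) [Ring T]

/-- Vanishing of `Ext^n_T(A, B)` (Ext in the abelian category of `T`-modules). -/
def extVanish (n : ℕ) (A B : ModuleCat.{u} T) : Prop :=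
  Subsingleton (((Ext ℤ (ModuleCat.{u} T) n).obj (op A)).obj B)

/-- The right `Ext^1`-orthogonal class `A^⊥`. -/
def rightOrth (A : ModuleCat.{u} T → Prop) : ModuleCat.{u} T → Prop :=
  fun M => ∀ X, A X → extVanish T 1 X M

/-- The left `Ext^1`-orthogonal class `^⊥B`. -/
def leftOrth (B : ModuleCat.{u} T → Prop) : ModuleCat.{u} T → Prop :=
  fun M => ∀ Y, B Y → extVanish T 1 M Y

/-- `(A, B)` is a cotorsion pair: `B = A^⊥` and `A = ^⊥B`. -/
def IsCotorsionPair (A B : ModuleCat.{u} T → Prop) : Prop :=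
  (∀ M, B M ↔ rightOrth T A M) ∧ (∀ M, A M ↔ leftOrth T B M)

/-- A hereditary pair: `Ext^i(A, B) = 0` for all `A ∈ A`, `B ∈ B`, `i ≥ 1`. -/
def HereditaryPair (A B : ModuleCat.{u} T → Prop) : Prop :=
  ∀ i : ℕ, 1 ≤ i → ∀ X Y, A X → B Y → extVanish T i X Y

/-- A short exact sequence `0 → M₁ → M₂ → M₃ → 0` presented by linear maps. -/
def IsSES {M₁ M₂ M₃ : ModuleCat.{u} T} (i : M₁ →ₗ[T] M₂) (p : M₂ →ₗ[T] M₃) : Prop :=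
  Function.Injective i ∧ Function.Surjective p ∧ Function.Exact i p

/-- Completeness of a cotorsion pair: every module has special approximations on both sides. -/
def CompletePair (A B : ModuleCat.{u} T → Prop) : Prop :=
  ∀ M : ModuleCat.{u} T,
    (∃ (B' A' : ModuleCat.{u} T) (i : M →ₗ[T] B') (p : B' →ₗ[T] A'),
        B B' ∧ A A' ∧ IsSES T i p) ∧
    (∃ (B' A' : ModuleCat.{u} T) (i : B' →ₗ[T] A') (p : A' →ₗ[T] M),
        B B' ∧ A A' ∧ IsSES T i p)

/-- dg-condition for a complex `W` with components in `P`, tested against chain maps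
into `W` from exact complexes with cycles in `Ort`. -/
def dgInto (P Ort : ModuleCat.{u} T → Prop) (W : Cx T) : Prop :=
  dwIn T P W ∧ ∀ V : Cx T, IsExactCx T V → cyclesIn T Ort V →
    ∀ f : V ⟶ W, NullHomotopic T f

/-- dg-condition for a complex `Y` with components in `P`, tested against chain maps
from `Y` to exact complexes with cycles in `Ort`. -/
def dgOut (P Ort : ModuleCat.{u} T → Prop) (Y : Cx T) : Prop :=
  dwIn T P Y ∧ ∀ U : Cx T, IsExactCx T U → cyclesIn T Ort U →
    ∀ f : Y ⟶ U, NullHomotopic T f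

end Ext

/-! ### Classes of modules defined by complexes of injectives/projectives -/

section Classes
variable (T : Type u) [Ring T]

/-- An FP-injective (absolutely pure) module: `Ext^1(F, A) = 0` for every finitely
presented `F`. -/
def FPInj (A : ModuleCat.{u} T) : Prop :=
  ∀ F : ModuleCat.{u} T, Module.FinitePresentation T F → extVanish T 1 F A

/-- A module of type `FP∞`: it has a projective resolution by finitely generated
(projective) modules. -/
def TypeFPInfty (F : ModuleCat.{u} T) : Prop :=
  ∃ (P : ℕ → ModuleCat.{u} T) (d : ∀ i, P (i+1) →ₗ[T] P i) (ε : P 0 →ₗ[T] F),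
    (∀ i, Module.Finite T (P i)) ∧ (∀ i, Projective (P i)) ∧
    Function.Surjective ε ∧ Function.Exact (d 0) ε ∧
    ∀ i, Function.Exact (d (i+1)) (d i)

/-- An absolutely clean module: `Ext^1(F, A) = 0` for every module `F` of type `FP∞`. -/
def AbsClean (A : ModuleCat.{u} T) : Prop :=
  ∀ F : ModuleCat.{u} T, TypeFPInfty T F → extVanish T 1 F A

/-- A totally acyclic complex of injectives: an exact complex of injective modules that
stays exact under `Hom(E, -)` for every injective `E`. -/
def TotAcyclicInjCx (C : Cx T) : Prop :=
  dwIn T (fun M => Injective M) C ∧ IsExactCx T C ∧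
    ∀ E : ModuleCat.{u} T, Injective E → homIntoExact T E C

/-- A Gorenstein injective module: a cycle of a totally acyclic complex of injectives. -/
def GorInj (M : ModuleCat.{u} T) : Prop :=
  ∃ C : Cx T, TotAcyclicInjCx T C ∧ IsCycleOf T C M

/-- An exact complex of injectives remaining exact under `Hom(A, -)` for all
FP-injective `A`. -/
def DingInjCx (C : Cx T) : Prop :=
  dwIn T (fun M => Injective M) C ∧ IsExactCx T C ∧
    ∀ A : ModuleCat.{u} T, FPInj T A → homIntoExact T A C

/-- A Ding injective module. -/
def DingInj (M : ModuleCat.{u} T) : Prop :=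
  ∃ C : Cx T, DingInjCx T C ∧ IsCycleOf T C M

/-- An exact complex of injectives remaining exact under `Hom(A, -)` for all
absolutely clean `A`. -/
def GorACInjCx (C : Cx T) : Prop :=
  dwIn T (fun M => Injective M) C ∧ IsExactCx T C ∧
    ∀ A : ModuleCat.{u} T, AbsClean T A → homIntoExact T A C

/-- A Gorenstein AC-injective module. -/
def GorACInj (M : ModuleCat.{u} T) : Prop :=
  ∃ C : Cx T, GorACInjCx T C ∧ IsCycleOf T C M

/-- A totally acyclic complex of projectives: an exact complex of projective modules that
stays exact under `Hom(-, Q)` for every projective `Q`. -/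
def TotAcyclicProjCx (C : Cx T) : Prop :=
  dwIn T (fun M => Projective M) C ∧ IsExactCx T C ∧
    ∀ Q : ModuleCat.{u} T, Projective Q → homOutExact T C Q

/-- A (possibly infinite) exact left resolution of `M` by modules in the class `P`:
`⋯ → D_1 → D_0 → M → 0`. -/
def ExactLeftRes (P : ModuleCat.{u} T → Prop) (M : ModuleCat.{u} T) : Prop :=
  ∃ (D : ℕ → ModuleCat.{u} T) (d : ∀ i, D (i+1) →ₗ[T] D i) (ε : D 0 →ₗ[T] M),
    (∀ i, P (D i)) ∧ Function.Surjective ε ∧ Function.Exact (d 0) ε ∧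
    ∀ i, Function.Exact (d (i+1)) (d i)

/-- Left resolution dimension at most `n` by modules in the class `P`: there is an exact
sequence `0 → D_n → ⋯ → D_0 → M → 0` with all `D_i ∈ P`. -/
def ResDimLe (P : ModuleCat.{u} T → Prop) (M : ModuleCat.{u} T) (n : ℕ) : Prop :=
  ∃ (D : ℕ → ModuleCat.{u} T) (d : ∀ i, D (i+1) →ₗ[T] D i) (ε : D 0 →ₗ[T] M),
    (∀ i, P (D i)) ∧ (∀ i, n < i → Subsingleton (D i)) ∧
    Function.Surjective ε ∧ Function.Exact (d 0) ε ∧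
    ∀ i, Function.Exact (d (i+1)) (d i)

/-- Right resolution (coresolution) dimension at most `n` by modules in the class `P`:
there is an exact sequence `0 → M → D^0 → ⋯ → D^n → 0` with all `D^i ∈ P`. -/
def CoresDimLe (P : ModuleCat.{u} T → Prop) (M : ModuleCat.{u} T) (n : ℕ) : Prop :=
  ∃ (D : ℕ → ModuleCat.{u} T) (ε : M →ₗ[T] D 0) (d : ∀ i, D i →ₗ[T] D (i+1)),
    (∀ i, P (D i)) ∧ (∀ i, n < i → Subsingleton (D i)) ∧
    Function.Injective ε ∧ Function.Exact ε (d 0) ∧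
    ∀ i, Function.Exact (d i) (d (i+1))

/-- Projective dimension at most `n`. -/
def projDimLe (M : ModuleCat.{u} T) (n : ℕ) : Prop :=
  ResDimLe T (fun Q => Projective Q) M n

/-- Injective dimension at most `n`. -/
def injDimLe (M : ModuleCat.{u} T) (n : ℕ) : Prop :=
  CoresDimLe T (fun E => Injective E) M n

end Classes

/-! ### Tensor products over a (noncommutative) ring, flatness, character modules -/

section Tensor
variable (S : Type u) [Ring S]
variable (M : Type u) [AddCommGroup M] [Module Sᵐᵒᵖ M] (N : Type u) [AddCommGroup N] [Module S N]

/-- Defining relations of the balanced tensor product `M ⊗_S N` of a right `S`-module `M`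
and a left `S`-module `N`. -/
def trel : Set (TensorProduct ℤ M N) :=
  {x | ∃ (r : S) (m : M) (n : N), x = (MulOpposite.op r • m) ⊗ₜ[ℤ] n - m ⊗ₜ[ℤ] (r • n)}

/-- The balanced tensor product `M ⊗_S N` of a right `S`-module and a left `S`-module. -/
def Tens : Type u := TensorProduct ℤ M N ⧸ Submodule.span ℤ (trel S M N)

instance : AddCommGroup (Tens S M N) :=
  inferInstanceAs (AddCommGroup (TensorProduct ℤ M N ⧸ Submodule.span ℤ (trel S M N)))

variable {S M N}
variable {M' : Type u} [AddCommGroup M'] [Module Sᵐᵒᵖ M']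
variable {N' : Type u} [AddCommGroup N'] [Module S N']

/-- Functoriality of the balanced tensor product in the first variable. -/
def tmapL (f : M →ₗ[Sᵐᵒᵖ] M') (N : Type u) [AddCommGroup N] [Module S N] :
    Tens S M N →ₗ[ℤ] Tens S M' N :=
  Submodule.mapQ _ _ (TensorProduct.map f.toAddMonoidHom.toIntLinearMap LinearMap.id) (by
    rw [Submodule.span_le]
    rintro x ⟨r, m, n, rfl⟩
    refine Submodule.mem_comap.2 (Submodule.subset_span ⟨r, f m, n, ?_⟩)
    erw [map_sub, TensorProduct.map_tmul, TensorProduct.map_tmul]; simp [map_smul])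

/-- Functoriality of the balanced tensor product in the second variable. -/
def tmapR (M : Type u) [AddCommGroup M] [Module Sᵐᵒᵖ M] (g : N →ₗ[S] N') :
    Tens S M N →ₗ[ℤ] Tens S M N' :=
  Submodule.mapQ _ _ (TensorProduct.map LinearMap.id g.toAddMonoidHom.toIntLinearMap) (by
    rw [Submodule.span_le]
    rintro x ⟨r, m, n, rfl⟩
    refine Submodule.mem_comap.2 (Submodule.subset_span ⟨r, m, g n, ?_⟩)
    erw [map_sub, TensorProduct.map_tmul, TensorProduct.map_tmul]; simp [map_smul])

end Tensor

section Char
variable (S : Type u) [Ring S] (M : Type u) [AddCommGroup M]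

/-- The character group `M⁺ = Hom_ℤ(M, ℚ/ℤ)`. -/
def CharMod : Type u := M →+ AddCircle (1 : ℚ)

instance : FunLike (CharMod M) M (AddCircle (1 : ℚ)) where
  coe c := c.toFun
  coe_injective _ _ h := AddMonoidHom.ext (congrFun h)

instance : LinearMapClass (CharMod M) ℤ M (AddCircle (1 : ℚ)) where
  map_add f x y := AddMonoidHom.map_add (M := M) f x y
  map_smulₛₗ f n x := by
    rw [RingHom.id_apply]; exact AddMonoidHom.map_zsmul (f : M →+ AddCircle (1:ℚ)) n x

instance : AddCommGroup (CharMod M) := inferInstanceAs (AddCommGroup (M →+ _))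

variable {M}

lemma CharMod.ext {f g : CharMod M} (h : ∀ m, f m = g m) : f = g := DFunLike.ext _ _ h

variable (M) [Module S M]

/-- The right `S`-action on the character module of a left `S`-module. -/
instance : SMul Sᵐᵒᵖ (CharMod M) :=
  ⟨fun s f => (f : M →+ AddCircle (1:ℚ)).comp (DistribMulAction.toAddMonoidHom M s.unop)⟩

variable {M}

lemma charSmul_apply (s : Sᵐᵒᵖ) (f : CharMod M) (m : M) :
    (s • f : CharMod M) m = f (s.unop • m) := rfl

instance : Module Sᵐᵒᵖ (CharMod M) where
  one_smul f := CharMod.ext fun m => by rw [charSmul_apply]; simp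
  mul_smul x y f := CharMod.ext fun m => by
    simp only [charSmul_apply, MulOpposite.unop_mul, mul_smul]
  smul_zero s := rfl
  smul_add s f g := rfl
  add_smul x y f := CharMod.ext fun m => by
    show f ((x + y).unop • m) = (x • f) m + (y • f) m
    rw [MulOpposite.unop_add, add_smul, map_add]; rfl
  zero_smul f := CharMod.ext fun m => by
    show f ((0 : Sᵐᵒᵖ).unop • m) = (0 : CharMod M) m
    simp only [MulOpposite.unop_zero, zero_smul]
    show f 0 = (0 : M →+ AddCircle (1:ℚ)) m
    simp

/-- The character module `M⁺` of a left `S`-module, as a right `S`-module. -/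
def charM (A : ModuleCat.{u} S) : ModuleCat.{u} Sᵐᵒᵖ := ModuleCat.of Sᵐᵒᵖ (CharMod A)

end Char

/-! ### F-total acyclicity, flat / Gorenstein flat / PGF modules (both sides) -/

section Sides
variable (S : Type u) [Ring S]

/-- Exactness of `C ⊗_S N` for a complex `C` of right `S`-modules and `N` a left
`S`-module. -/
def tensExactR (C : Cx Sᵐᵒᵖ) (N : ModuleCat.{u} S) : Prop :=
  ∀ n : ℤ, Function.Exact (tmapL (C.d (n+1) n).hom N) (tmapL (C.d n (n-1)).hom N)

/-- Exactness of `M ⊗_S C` for a right `S`-module `M` and a complex `C` of left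
`S`-modules. -/
def tensExactL (M : ModuleCat.{u} Sᵐᵒᵖ) (C : Cx S) : Prop :=
  ∀ n : ℤ, Function.Exact (tmapR M (C.d (n+1) n).hom) (tmapR M (C.d n (n-1)).hom)

/-- A flat right `S`-module: tensoring with it preserves injections of left modules. -/
def FlatRight (M : ModuleCat.{u} Sᵐᵒᵖ) : Prop :=
  ∀ (N N' : ModuleCat.{u} S) (g : N →ₗ[S] N'),
    Function.Injective g → Function.Injective (tmapR M g)

/-- A flat left `S`-module: tensoring with it preserves injections of right modules. -/
def FlatLeft (N : ModuleCat.{u} S) : Prop :=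
  ∀ (M M' : ModuleCat.{u} Sᵐᵒᵖ) (f : M →ₗ[Sᵐᵒᵖ] M'),
    Function.Injective f → Function.Injective (tmapL f N)

/-- An F-totally acyclic complex of right `S`-modules: exact, and `C ⊗ I` is exact for
every injective left `S`-module `I`. -/
def FTotAcyclicR (C : Cx Sᵐᵒᵖ) : Prop :=
  IsExactCx Sᵐᵒᵖ C ∧ ∀ I : ModuleCat.{u} S, Injective I → tensExactR S C I

/-- An F-totally acyclic complex of left `S`-modules: exact, and `I ⊗ C` is exact for
every injective right `S`-module `I`. -/
def FTotAcyclicL (C : Cx S) : Prop :=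
  IsExactCx S C ∧ ∀ I : ModuleCat.{u} Sᵐᵒᵖ, Injective I → tensExactL S I C

/-- A Gorenstein flat right `S`-module: a cycle of an F-totally acyclic complex of flat
right modules. -/
def GFlatR (M : ModuleCat.{u} Sᵐᵒᵖ) : Prop :=
  ∃ C : Cx Sᵐᵒᵖ, dwIn Sᵐᵒᵖ (FlatRight S) C ∧ FTotAcyclicR S C ∧ IsCycleOf Sᵐᵒᵖ C M

/-- A Gorenstein flat left `S`-module. -/
def GFlatL (M : ModuleCat.{u} S) : Prop :=
  ∃ C : Cx S, dwIn S (FlatLeft S) C ∧ FTotAcyclicL S C ∧ IsCycleOf S C M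

/-- A Gorenstein cotorsion right `S`-module: `Ext^1(G, -)` vanishes on it for every
Gorenstein flat `G`. -/
def GorCotR (Y : ModuleCat.{u} Sᵐᵒᵖ) : Prop :=
  ∀ G : ModuleCat.{u} Sᵐᵒᵖ, GFlatR S G → extVanish Sᵐᵒᵖ 1 G Y

/-- A Gorenstein cotorsion left `S`-module. -/
def GorCotL (Y : ModuleCat.{u} S) : Prop :=
  ∀ G : ModuleCat.{u} S, GFlatL S G → extVanish S 1 G Y

/-- An exact complex of projective left modules which stays exact when tensored with any
injective right module. -/
def PGFCxL (C : Cx S) : Prop :=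
  dwIn S (fun Q => Projective Q) C ∧ IsExactCx S C ∧
    ∀ I : ModuleCat.{u} Sᵐᵒᵖ, Injective I → tensExactL S I C

/-- A projectively coresolved Gorenstein flat left `S`-module. -/
def PGFL (M : ModuleCat.{u} S) : Prop := ∃ C : Cx S, PGFCxL S C ∧ IsCycleOf S C M

/-- An exact complex of projective right modules which stays exact when tensored with any
injective left module. -/
def PGFCxR (C : Cx Sᵐᵒᵖ) : Prop :=
  dwIn Sᵐᵒᵖ (fun Q => Projective Q) C ∧ IsExactCx Sᵐᵒᵖ C ∧
    ∀ I : ModuleCat.{u} S, Injective I → tensExactR S C I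

/-- A projectively coresolved Gorenstein flat right `S`-module. -/
def PGFR (M : ModuleCat.{u} Sᵐᵒᵖ) : Prop := ∃ C : Cx Sᵐᵒᵖ, PGFCxR S C ∧ IsCycleOf Sᵐᵒᵖ C M

/-- `S` is a coherent ring: finitely generated one-sided ideals (on either side) are
finitely presented. -/
def IsCoherentRing : Prop :=
  (∀ I : Submodule S S, I.FG → Module.FinitePresentation S I) ∧
  (∀ I : Submodule Sᵐᵒᵖ Sᵐᵒᵖ, I.FG → Module.FinitePresentation Sᵐᵒᵖ I)

/-- `S` is left `n`-perfect: every flat left `S`-module has projective dimension ≤ `n`. -/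
def LeftNPerfect (n : ℕ) : Prop :=
  ∀ M : ModuleCat.{u} S, FlatLeft S M → projDimLe S M n

/-- `S` is an Iwanaga–Gorenstein ring: two-sided noetherian with finite self-injective
dimension on both sides. -/
def IwanagaGorenstein : Prop :=
  IsNoetherianRing S ∧ IsNoetherianRing Sᵐᵒᵖ ∧
  (∃ n : ℕ, injDimLe S (ModuleCat.of S S) n) ∧
  (∃ n : ℕ, injDimLe Sᵐᵒᵖ (ModuleCat.of Sᵐᵒᵖ Sᵐᵒᵖ) n)

end Sides

/-! ### The commutative case -/

section Comm
variable (R : Type u) [CommRing R]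

/-- For a commutative ring: exactness of `I ⊗_R C`. -/
def tensExactC (I : ModuleCat.{u} R) (C : Cx R) : Prop :=
  ∀ n : ℤ, Function.Exact
    (LinearMap.lTensor (R := R) (M := I) (C.d (n+1) n).hom)
    (LinearMap.lTensor (R := R) (M := I) (C.d n (n-1)).hom)

/-- An F-totally acyclic complex over a commutative ring: exact, and `I ⊗_R C` is exact
for every injective module `I`. -/
def FTotAcyclicC (C : Cx R) : Prop :=
  IsExactCx R C ∧ ∀ I : ModuleCat.{u} R, Injective I → tensExactC R I C

/-- A Gorenstein flat module over a commutative ring. -/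
def GFlatC (M : ModuleCat.{u} R) : Prop :=
  ∃ C : Cx R, dwIn R (fun F => Module.Flat R F) C ∧ FTotAcyclicC R C ∧ IsCycleOf R C M

/-- A Gorenstein cotorsion module over a commutative ring. -/
def GorCotC (Y : ModuleCat.{u} R) : Prop :=
  ∀ G : ModuleCat.{u} R, GFlatC R G → extVanish R 1 G Y

/-- An exact complex of projectives over a commutative ring which stays exact when
tensored with any injective module. -/
def PGFCxC (C : Cx R) : Prop :=
  dwIn R (fun Q => Projective Q) C ∧ IsExactCx R C ∧
    ∀ I : ModuleCat.{u} R, Injective I → tensExactC R I C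

/-- A projectively coresolved Gorenstein flat module over a commutative ring. -/
def PGFC (M : ModuleCat.{u} R) : Prop := ∃ C : Cx R, PGFCxC R C ∧ IsCycleOf R C M

/-- The character module `M⁺` over a commutative ring, as an `R`-module. -/
def charC (M : ModuleCat.{u} R) : ModuleCat.{u} R := ModuleCat.of R (CharacterModule M)

/-- A coherent commutative ring: every finitely generated ideal is finitely presented. -/
def IsCoherentCommRing : Prop := ∀ I : Ideal R, I.FG → Module.FinitePresentation R I

/-- A commutative noetherian ring is Gorenstein if its self-injective dimension is
finite. -/
def GorensteinCommRing : Prop :=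
  IsNoetherianRing R ∧ ∃ n : ℕ, injDimLe R (ModuleCat.of R R) n

end Comm

end AcyclicGorenstein

end

open AcyclicGorenstein

/-! ### Auxiliary material for the proof of `statement_15` -/

noncomputable section StatementAux
open CategoryTheory Limits Projective

namespace StatementAux

section Resolutions

variable {C : Type*} [Category C] [Abelian C] [EnoughProjectives C]

/-- The complex of an explicit projective resolution built from chosen data in low degrees. -/
def resComplex {Z P0 P1 : C} (π : P0 ⟶ Z) (d1 : P1 ⟶ P0) : ChainComplex C ℕ :=
  ChainComplex.mk' P0 P1 d1 (fun f => ⟨_, Projective.d f,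
    @id (Projective.d f ≫ f = 0)
      (by simp : (Projective.π (kernel f) ≫ kernel.ι f) ≫ f = 0)⟩)

lemma resComplex_d_1_0 {Z P0 P1 : C} (π : P0 ⟶ Z) (d1 : P1 ⟶ P0) :
    (resComplex π d1).d 1 0 = d1 := by
  simp [resComplex]

lemma resComplex_exactAt_succ {Z P0 P1 : C} (π : P0 ⟶ Z) (d1 : P1 ⟶ P0) (n : ℕ) :
    (resComplex π d1).ExactAt (n + 1) := by
  rw [HomologicalComplex.exactAt_iff' _ (n + 1 + 1) (n + 1) n (by simp) (by simp)]
  refine (ShortComplex.exact_iff_of_iso ?_).1 (exact_d_f ((resComplex π d1).d (n + 1) n))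
  refine ShortComplex.isoMk (ChainComplex.mk'XIso P0 P1 d1 (fun f => ⟨_, Projective.d f, @id (Projective.d f ≫ f = 0)
    (by simp : (Projective.π (kernel f) ≫ kernel.ι f) ≫ f = 0)⟩) n).symm
    (Iso.refl _) (Iso.refl _) ?_ ?_
  · dsimp [HomologicalComplex.sc']; simp [resComplex, ChainComplex.mk'_d]
    erw [Iso.inv_hom_id_assoc, Category.comp_id]
  · dsimp [HomologicalComplex.sc']; erw [Category.id_comp, Category.comp_id]
    rfl

/-- A projective resolution constructed from chosen data in low degrees. -/
def resOfExact {Z P0 P1 : C} (π : P0 ⟶ Z) (d1 : P1 ⟶ P0) [Projective P0] [Projective P1]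
    [Epi π] (w : d1 ≫ π = 0) (he : (ShortComplex.mk d1 π w).Exact) :
    ProjectiveResolution Z where
  complex := resComplex π d1
  projective n := by
    rcases n with (_ | _ | n)
    · exact inferInstanceAs (Projective P0)
    · exact inferInstanceAs (Projective P1)
    · rcases n with (_ | n) <;> apply Projective.projective_over
  π := (ChainComplex.toSingle₀Equiv _ _).symm ⟨π, by
        rw [resComplex_d_1_0]; exact w⟩
  quasiIso := ⟨fun n => by
    cases n
    · rw [ChainComplex.quasiIsoAt₀_iff, ShortComplex.quasiIso_iff_of_zeros']
      · refine (ShortComplex.exact_and_epi_g_iff_of_iso ?_).2 ⟨he, by dsimp; infer_instance⟩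
        exact ShortComplex.isoMk (Iso.refl _) (Iso.refl _) (Iso.refl _)
          (by erw [Category.id_comp, Category.comp_id]; exact (resComplex_d_1_0 π d1).symm)
          (by erw [Category.id_comp, Category.comp_id]
              exact (ChainComplex.toSingle₀Equiv_symm_apply_f_zero (C := resComplex π d1) π _).symm)
      all_goals rfl
    · rw [quasiIsoAt_iff_exactAt']
      · apply resComplex_exactAt_succ
      · apply ChainComplex.exactAt_succ_single_obj⟩

end Resolutions

open Opposite in
lemma subsingleton_ext_one {R : Type u} [Ring R] (F B : ModuleCat.{u} R)
    (P : ProjectiveResolution F)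
    (hlift : ∀ φ : P.complex.X 1 ⟶ B, P.complex.d 2 1 ≫ φ = 0 →
      ∃ ψ : P.complex.X 0 ⟶ B, P.complex.d 1 0 ≫ ψ = φ) :
    Subsingleton (((Ext ℤ (ModuleCat.{u} R) 1).obj (op F)).obj B) := by
  have hz : Limits.IsZero ((P.complex.linearYonedaObj ℤ B).homology 1) := by
    rw [← HomologicalComplex.exactAt_iff_isZero_homology]
    rw [HomologicalComplex.exactAt_iff' _ 0 1 2 (by simp) (by simp)]
    rw [ShortComplex.moduleCat_exact_iff]
    intro φ hφ
    obtain ⟨ψ, hψ⟩ := hlift φ hφ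
    exact ⟨ψ, hψ⟩
  have e := P.isoExt (R := ℤ) 1 B
  have : Subsingleton ((P.complex.linearYonedaObj ℤ B).homology 1) := by
    have := ((forget (ModuleCat ℤ)).mapIso
      (hz.iso (ModuleCat.isZero_of_subsingleton (ModuleCat.of ℤ PUnit)))).toEquiv
    have hP : Subsingleton ((forget (ModuleCat ℤ)).obj (ModuleCat.of ℤ PUnit)) :=
      inferInstanceAs (Subsingleton PUnit)
    exact this.subsingleton
  exact ((forget (ModuleCat ℤ)).mapIso e).toEquiv.subsingleton

lemma fpInj_of_fg_extension {R : Type u} [CommRing R] (B : ModuleCat.{u} R)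
    (hB : ∀ (P0 : Type u) [AddCommGroup P0] [Module R P0] (K : Submodule R P0), K.FG →
      ∀ φ : ↥K →ₗ[R] ↑B, ∃ ψ : P0 →ₗ[R] ↑B, ∀ x : ↥K, ψ x = φ x)
    (F : ModuleCat.{u} R) (hF : Module.FinitePresentation R F) :
    Subsingleton (((Ext ℤ (ModuleCat.{u} R) 1).obj (Opposite.op F)).obj B) := by
  have : Module.FinitePresentation R F := hF
  obtain ⟨n, f, hf⟩ := Module.Finite.exists_fin' R F
  have hK : (LinearMap.ker f).FG := Module.FinitePresentation.fg_ker f hf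
  have : Module.Finite R ↥(LinearMap.ker f) := Module.Finite.iff_fg.mpr hK
  obtain ⟨l, q, hq⟩ := Module.Finite.exists_fin' R ↥(LinearMap.ker f)
  set P0 : ModuleCat.{u} R := ModuleCat.of R (Fin n → R)
  set P1 : ModuleCat.{u} R := ModuleCat.of R (Fin l → R)
  have : Projective P0 := ModuleCat.projective_of_free (Pi.basisFun R (Fin n))
  have : Projective P1 := ModuleCat.projective_of_free (Pi.basisFun R (Fin l))
  let π : P0 ⟶ F := ModuleCat.ofHom f
  let d1 : P1 ⟶ P0 := ModuleCat.ofHom ((LinearMap.ker f).subtype ∘ₗ q)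
  have : Epi π := (ModuleCat.epi_iff_surjective π).mpr hf
  have w : d1 ≫ π = 0 := by
    exact ModuleCat.hom_ext (LinearMap.ext fun x => (q x).2)
  have he : (ShortComplex.mk d1 π w).Exact := by
    rw [ShortComplex.moduleCat_exact_iff]
    intro x hx
    obtain ⟨y, hy⟩ := hq ⟨x, LinearMap.mem_ker.mpr hx⟩
    exact ⟨y, congrArg Subtype.val hy⟩
  set P := resOfExact π d1 w he
  apply subsingleton_ext_one F B P
  intro φ hφ
  have hex := P.complex_exactAt_succ 0
  rw [HomologicalComplex.exactAt_iff' _ 2 1 0 (by simp) (by simp),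
    ShortComplex.moduleCat_exact_iff] at hex
  have hker : ∀ x : P.complex.X 1, (P.complex.d 1 0).hom x = 0 → φ.hom x = 0 := by
    intro x hx
    obtain ⟨y, hy⟩ := hex x hx
    have : φ.hom x = (P.complex.d 2 1 ≫ φ).hom y := by rw [← hy]; rfl
    rw [this, hφ]
    rfl
  set D1 : (P.complex.X 1 : Type u) →ₗ[R] P.complex.X 0 := (P.complex.d 1 0).hom
  have hKr : (LinearMap.range D1).FG := by
    have : Module.Finite R (P.complex.X 1) := inferInstanceAs (Module.Finite R (Fin l → R))
    exact Module.Finite.iff_fg.mp (Module.Finite.range D1)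
  let φbar : (↥(P.complex.X 1) ⧸ LinearMap.ker D1) →ₗ[R] ↑B :=
    Submodule.liftQ _ φ.hom (fun x hx => hker x hx)
  let φ' : ↥(LinearMap.range D1) →ₗ[R] ↑B :=
    φbar ∘ₗ (LinearMap.quotKerEquivRange D1).symm.toLinearMap
  obtain ⟨ψ, hψ⟩ := hB (P.complex.X 0) (LinearMap.range D1) hKr φ'
  refine ⟨ModuleCat.ofHom ψ, ?_⟩
  ext x
  have h1 : (P.complex.d 1 0 ≫ ModuleCat.ofHom ψ).hom x = ψ (D1 x) := rfl
  rw [h1, hψ ⟨D1 x, ⟨x, rfl⟩⟩]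
  show φbar ((LinearMap.quotKerEquivRange D1).symm ⟨D1 x, _⟩) = φ.hom x
  have h2 : (LinearMap.quotKerEquivRange D1).symm ⟨D1 x, ⟨x, rfl⟩⟩ =
      Submodule.Quotient.mk x := by
    rw [LinearEquiv.symm_apply_eq]
    exact Subtype.ext (by simp [LinearMap.quotKerEquivRange_apply_mk])
  rw [h2]
  rfl

variable {R : Type u} [CommRing R]

/-- The submodule of eventually-zero sequences in a product. -/
def evSub (E : ℕ → ModuleCat.{u} R) : Submodule R (∀ n, E n) where
  carrier := {v | ∃ N, ∀ n, N ≤ n → v n = 0}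
  add_mem' := by
    rintro a b ⟨N, hN⟩ ⟨M, hM⟩
    exact ⟨max N M, fun n hn => by
      simp only [Pi.add_apply, hN n (le_trans (le_max_left _ _) hn),
        hM n (le_trans (le_max_right _ _) hn), add_zero]⟩
  zero_mem' := ⟨0, fun n _ => rfl⟩
  smul_mem' := by
    rintro r a ⟨N, hN⟩
    exact ⟨N, fun n hn => by simp only [Pi.smul_apply, hN n hn, smul_zero]⟩

lemma evSub_extension (E : ℕ → ModuleCat.{u} R) (hE : ∀ n, Injective (E n))
    (P0 : Type u) [AddCommGroup P0] [Module R P0] (K : Submodule R P0) (hK : K.FG)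
    (φ : ↥K →ₗ[R] ↥(evSub E)) : ∃ ψ : P0 →ₗ[R] ↥(evSub E), ∀ x : ↥K, ψ x = φ x := by
  have : Module.Finite R ↥K := Module.Finite.iff_fg.mpr hK
  obtain ⟨k, s, hs⟩ := Module.Finite.exists_fin (R := R) (M := ↥K)
  set N : ℕ := Finset.univ.sup (fun i : Fin k => (φ (s i)).2.choose) with hN
  have hbound : ∀ x : ↥K, ∀ n, N ≤ n → ((φ x : ∀ n, E n)) n = 0 := by
    intro x
    have hx : x ∈ Submodule.span R (Set.range s) := hs ▸ Submodule.mem_top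
    induction hx using Submodule.span_induction with
    | mem y hy =>
      obtain ⟨i, rfl⟩ := hy
      intro n hn
      exact (φ (s i)).2.choose_spec n
        (le_trans (Finset.le_sup (f := fun i : Fin k => (φ (s i)).2.choose)
          (Finset.mem_univ i)) hn)
    | zero => intro n _; simp
    | add y z _ _ hy hz => intro n hn; simp [hy n hn, hz n hn]
    | smul r y _ hy => intro n hn; simp [hy n hn]
  have hinj : ∀ n, Module.Injective R (E n) := by
    intro n
    exact Module.injective_module_of_injective_object R (E n) (inj := hE n)
  have hcomp : ∀ n : ℕ, ∃ hh : P0 →ₗ[R] E n, ∀ x : ↥K, hh x = (φ x : ∀ n, E n) n := by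
    intro n
    obtain ⟨hn, hhn⟩ := (hinj n).out K.subtype Subtype.val_injective
      ((LinearMap.proj n ∘ₗ (evSub E).subtype) ∘ₗ φ)
    exact ⟨hn, fun x => hhn x⟩
  choose hmap hmapspec using hcomp
  refine ⟨LinearMap.codRestrict (evSub E)
    (LinearMap.pi (fun n => if n < N then hmap n else 0))
    (fun x => ⟨N, fun n hn => by
      simp only [LinearMap.pi_apply]
      rw [if_neg (not_lt.mpr hn)]
      rfl⟩), ?_⟩
  intro x
  apply Subtype.ext
  funext n
  show (LinearMap.pi (fun n => if n < N then hmap n else 0)) x.1 n = (φ x : ∀ n, E n) n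
  simp only [LinearMap.pi_apply]
  by_cases hn : n < N
  · rw [if_pos hn]
    have := hmapspec n x
    simpa using this
  · rw [if_neg hn, hbound x n (not_lt.mp hn)]
    rfl

/-- The two-periodic exact complex `⋯ → T → T → T → ⋯` with alternating
identity and zero differentials. -/
def perCx (T : ModuleCat.{u} R) : AcyclicGorenstein.Cx R where
  X _ := T
  d i j := if Odd i ∧ j + 1 = i then 𝟙 T else 0
  shape i j hij := if_neg (fun hc => hij hc.2)
  d_comp_d' i j k hij _ := by
    have hij' : j + 1 = i := hij
    by_cases hj : Odd j
    · rw [if_neg (fun hc : Odd i ∧ j + 1 = i =>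
        (Int.not_odd_iff_even.mpr (hij' ▸ hj.add_one)) hc.1), zero_comp]
    · rw [if_neg (fun hc : Odd j ∧ k + 1 = j => hj hc.1), comp_zero]

lemma perCx_d_even (T : ModuleCat.{u} R) {i j : ℤ} (hij : j + 1 = i) (hi : Odd i) :
    (perCx T).d i j = 𝟙 T := if_pos ⟨hi, hij⟩

lemma perCx_d_odd (T : ModuleCat.{u} R) (i j : ℤ) (hi : ¬ Odd i) :
    (perCx T).d i j = 0 := if_neg (fun hc => hi hc.1)

lemma perCx_exact (T : ModuleCat.{u} R) : AcyclicGorenstein.IsExactCx R (perCx T) := by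
  intro n
  rcases Int.even_or_odd n with he | ho
  · rw [perCx_d_even T rfl (Even.add_one he), perCx_d_odd T n (n - 1)
      (Int.not_odd_iff_even.mpr he)]
    intro y
    constructor
    · intro _
      exact ⟨y, ModuleCat.id_apply _ y⟩
    · intro _
      exact LinearMap.zero_apply y
  · rw [perCx_d_odd T (n + 1) n (Int.not_odd_iff_even.mpr (Odd.add_one ho)),
      perCx_d_even T (by ring : n - 1 + 1 = n) ho]
    intro y
    constructor
    · intro hy
      refine ⟨0, ?_⟩
      have h0 : y = 0 := hy
      rw [h0]
      exact LinearMap.map_zero _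
    · rintro ⟨x, rfl⟩
      exact (ModuleCat.id_apply _ _).trans (LinearMap.zero_apply x)

end StatementAux

end StatementAux


/-- a commutative coherent ring over which every exact complex of
FP-injective modules has all cycles Ding injective is noetherian. -/
theorem statement_15 (R : Type u) [CommRing R] (hcoh : IsCoherentCommRing R)
    (h : ∀ C : Cx R, IsExactCx R C → dwIn R (FPInj R) C → cyclesIn R (DingInj R) C) :
    IsNoetherianRing R := by
  classical
  rw [isNoetherianRing_iff, ← monotone_stabilizes_iff_noetherian]
  intro c
  -- a family of injective modules containing `R ⧸ c n`
  set E : ℕ → ModuleCat.{u} R :=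
    fun n => CategoryTheory.Injective.under (ModuleCat.of R (R ⧸ c n)) with hE
  have hEinj : ∀ n, CategoryTheory.Injective (E n) := fun n => by
    rw [hE]; infer_instance
  set TT : ModuleCat.{u} R := ModuleCat.of R ↥(StatementAux.evSub E) with hTT
  -- `TT` is FP-injective
  have hFP : FPInj R TT := by
    intro F hF
    exact StatementAux.fpInj_of_fg_extension TT
      (fun P0 _ _ K hK φ => StatementAux.evSub_extension E hEinj P0 K hK φ) F hF
  -- the two-periodic complex on `TT` is exact with FP-injective components
  have hcyc := h (StatementAux.perCx TT) (StatementAux.perCx_exact TT) (fun n => hFP) 0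
  simp only [DingInj, DingInjCx, IsCycleOf, cyclesIn] at hcyc
  obtain ⟨D, ⟨hDdw, hDex, hDhom⟩, m, ⟨em⟩⟩ := hcyc
  -- identify `TT` with the 0-th cycle of the periodic complex
  have hd0 : (StatementAux.perCx TT).d 0 (0-1) = 0 :=
    StatementAux.perCx_d_odd TT 0 (0-1) (Int.not_odd_iff_even.mpr Even.zero)
  let e0 : (↥(StatementAux.evSub E)) ≃ₗ[R]
      ↥(LinearMap.ker ((StatementAux.perCx TT).d 0 (0-1)).hom) :=
    { toFun := fun x => ⟨x, by
        show ((StatementAux.perCx TT).d 0 (0-1)).hom x = 0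
        rw [hd0]
        exact LinearMap.zero_apply x⟩
      invFun := fun x => x.1
      map_add' := fun _ _ => rfl
      map_smul' := fun _ _ => rfl
      left_inv := fun _ => rfl
      right_inv := fun x => Subtype.ext rfl }
  let e : (↥(StatementAux.evSub E)) ≃ₗ[R] ↥(LinearMap.ker (D.d m (m-1)).hom) :=
    e0.trans (em : ↥(LinearMap.ker ((StatementAux.perCx TT).d 0 (0-1)).hom) ≃ₗ[R]
      ↥(LinearMap.ker (D.d m (m-1)).hom))
  -- factor the inclusion of the cycle through `D.X (m+1)`
  let f : (↥(StatementAux.evSub E)) →ₗ[R] D.X m :=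
    (LinearMap.ker (D.d m (m-1)).hom).subtype ∘ₗ e.toLinearMap
  have hf : (D.d m (m-1)).hom ∘ₗ f = 0 := LinearMap.ext fun x => (e x).2
  obtain ⟨g, hg⟩ := hDhom TT hFP m f hf
  -- the retraction
  have hdd : ∀ x : D.X (m+1), (D.d m (m-1)).hom ((D.d (m+1) m).hom x) = 0 := by
    intro x
    have h0 : D.d (m+1) m ≫ D.d m (m-1) = 0 := D.d_comp_d _ _ _
    have hx : (D.d m (m-1)).hom ((D.d (m+1) m).hom x) = (D.d (m+1) m ≫ D.d m (m-1)).hom x := rfl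
    rw [hx, h0]
    exact LinearMap.zero_apply x
  let p : (D.X (m+1) : Type u) →ₗ[R] ↥(StatementAux.evSub E) :=
    e.symm.toLinearMap ∘ₗ LinearMap.codRestrict (LinearMap.ker (D.d m (m-1)).hom)
      (D.d (m+1) m).hom (fun x => LinearMap.mem_ker.mpr (hdd x))
  have hpg : ∀ t, p (g t) = t := by
    intro t
    show e.symm ⟨(D.d (m+1) m).hom (g t), _⟩ = t
    rw [LinearEquiv.symm_apply_eq]
    exact Subtype.ext (LinearMap.congr_fun hg t)
  -- `D.X (m+1)` is an injective module
  have hXinj : Module.Injective R (D.X (m+1)) :=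
    Module.injective_module_of_injective_object R (D.X (m+1)) (inj := hDdw (m+1))
  -- the canonical map from the union ideal
  set I : Submodule R R := ⨆ n, c n with hI
  let ι : ∀ n, (R ⧸ c n) →ₗ[R] E n := fun n =>
    (CategoryTheory.Injective.ι (ModuleCat.of R (R ⧸ c n))).hom
  have hι : ∀ n, Function.Injective (ι n) := fun n =>
    (ModuleCat.mono_iff_injective (CategoryTheory.Injective.ι _)).mp inferInstance
  let φ0 : R →ₗ[R] (∀ n, E n) := LinearMap.pi (fun n => ι n ∘ₗ (c n).mkQ)
  have hbd : ∀ x : ↥I, φ0 x.1 ∈ StatementAux.evSub E := by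
    rintro ⟨x, hx⟩
    obtain ⟨N, hN⟩ := (Submodule.mem_iSup_of_directed _ (c.monotone.directed_le)).mp hx
    refine ⟨N, fun n hn => ?_⟩
    show (ι n) ((c n).mkQ x) = 0
    rw [Submodule.mkQ_apply, (Submodule.Quotient.mk_eq_zero _).mpr (c.monotone hn hN)]
    exact LinearMap.map_zero _
  let φc : ↥I →ₗ[R] ↥(StatementAux.evSub E) :=
    LinearMap.codRestrict (StatementAux.evSub E) (φ0 ∘ₗ I.subtype) hbd
  -- extend it to all of `R` using injectivity
  obtain ⟨Ψ, hΨ⟩ := hXinj.out I.subtype Subtype.val_injective (g ∘ₗ φc)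
  let Φ : R →ₗ[R] ↥(StatementAux.evSub E) := p ∘ₗ Ψ
  have hΦ : ∀ x : ↥I, Φ x.1 = φc x := by
    intro x
    show p (Ψ (I.subtype x)) = φc x
    rw [hΨ x]
    exact hpg (φc x)
  obtain ⟨N, hNb⟩ := (Φ 1).2
  refine ⟨N, fun m' hm' => ?_⟩
  have hIsub : ∀ n, N ≤ n → I ≤ c n := by
    intro n hn x hx
    have h1 : Φ x = x • Φ 1 := by
      rw [← map_smul]
      congr 1
      rw [smul_eq_mul, mul_one]
    have h2 : (Φ x).1 n = 0 := by
      rw [h1]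
      show x • (Φ 1).1 n = 0
      rw [hNb n hn, smul_zero]
    have h3 : (Φ x).1 n = (ι n) ((c n).mkQ x) := by
      rw [hΦ ⟨x, hx⟩]
      rfl
    have h4 : (ι n) ((c n).mkQ x) = (ι n) 0 := by
      rw [← h3, h2, LinearMap.map_zero]
    have h5 := hι n h4
    rwa [Submodule.mkQ_apply, Submodule.Quotient.mk_eq_zero] at h5
  have hcI : ∀ n, c n ≤ I := fun n => le_iSup (fun n => c n) n
  exact le_antisymm ((hcI N).trans (hIsub m' hm')) ((hcI m').trans (hIsub N le_rfl))
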